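/- Define the step kernel on ℝⁿ by k(x,y) = 1 if yᵢ ≥ xᵢ for all i, and 0 otherwise. Let g : ℝⁿ → ℝ be L-Lipschitz (in the sup norm) on a compact box X = [0,1]ⁿ, and ε > 0. Then there exist finitely many points x₁,…,x_N ∈ X and coefficients α₁,…,α_N ∈ ℝ such that |Σᵢ αᵢ k(xᵢ, x) − g(x)| ≤ ε for all x ∈ X. -/

import Mathlib

/-- The step-kernel matrix on a finite grid is injective (as a linear map via `mulVec`). -/
lemma step_matrix_injective {ι : Type*} [Fintype ι] [DecidableEq ι]
    [PartialOrder ι] [DecidableRel ((· ≤ ·) : ι → ι → Prop)] :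
    Function.Injective
      ((Matrix.of fun l k : ι => if k ≤ l then (1:ℝ) else 0).mulVecLin) := by
  classical
  rw [← LinearMap.ker_eq_bot, LinearMap.ker_eq_bot']
  intro α hα
  by_contra hne
  have hs : (Finset.univ.filter fun k : ι => α k ≠ 0).Nonempty := by
    rcases Function.ne_iff.1 hne with ⟨k, hk⟩
    exact ⟨k, by simp only [Finset.mem_filter, Finset.mem_univ, true_and]; simpa using hk⟩
  obtain ⟨k, hkm⟩ := Finset.exists_minimal hs
  have hk : k ∈ Finset.univ.filter fun k : ι => α k ≠ 0 := hkm.prop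
  have hmin := fun b (hb : b ∈ Finset.univ.filter fun k : ι => α k ≠ 0) => hkm.not_lt hb
  have hk0 : α k ≠ 0 := (Finset.mem_filter.1 hk).2
  have := congrFun hα k
  simp only [Matrix.mulVecLin_apply, Matrix.mulVec, dotProduct,
    Matrix.of_apply, Pi.zero_apply] at this
  rw [Finset.sum_eq_single k] at this
  · simp at this; exact hk0 this
  · intro b _ hbk
    by_cases hb : b ≤ k
    · have hblt : b < k := lt_of_le_of_ne hb hbk
      have : α b = 0 := by
        by_contra hb0
        exact hmin b (Finset.mem_filter.2 ⟨Finset.mem_univ _, hb0⟩) hblt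
      simp [this]
    · simp [hb]
  · intro h; exact absurd (Finset.mem_univ k) h

/-- The step kernel `k(x',x) = 1_{x ≥ x'}` (componentwise) can uniformly approximate,
to accuracy `ε`, any `L`-Lipschitz (sup norm) function on the box `[0,1]ⁿ` by a finite
linear combination `Σᵢ αᵢ k(xᵢ, ·)`. -/
theorem step_kernel_uniform_approximation {n : ℕ} (g : (Fin n → ℝ) → ℝ)
    (L ε : ℝ) (hL : 0 < L) (hε : 0 < ε)
    (hLip : ∀ x ∈ Set.Icc (0 : Fin n → ℝ) 1, ∀ y ∈ Set.Icc (0 : Fin n → ℝ) 1,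
      |g x - g y| ≤ L * ‖x - y‖) :
    ∃ (N : ℕ) (pts : Fin N → (Fin n → ℝ)) (α : Fin N → ℝ),
      (∀ i, pts i ∈ Set.Icc (0 : Fin n → ℝ) 1) ∧
      ∀ x ∈ Set.Icc (0 : Fin n → ℝ) 1,
        |(∑ i, α i * ({y : Fin n → ℝ | ∀ j, pts i j ≤ y j}.indicator
            (fun _ => (1 : ℝ)) x)) - g x| ≤ ε := by
  classical
  set m : ℕ := ⌈L / ε⌉₊ with hm
  have hm0 : 0 < m := Nat.ceil_pos.2 (div_pos hL hε)
  have hmR : (0:ℝ) < m := by exact_mod_cast hm0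
  have hinv : (1:ℝ)/m ≤ ε / L := by
    rw [div_le_div_iff₀ hmR hL, one_mul]
    have : L / ε ≤ (m:ℝ) := Nat.le_ceil _
    calc L = (L/ε) * ε := by field_simp
    _ ≤ (m:ℝ) * ε := by nlinarith
    _ = ε * m := mul_comm _ _
  set I := (Fin n → Fin (m+1)) with hI
  let p : I → (Fin n → ℝ) := fun k j => (k j : ℝ) / m
  -- surjectivity of the kernel matrix
  have hsurj : Function.Surjective
      ((Matrix.of fun l k : I => if k ≤ l then (1:ℝ) else 0).mulVecLin) :=
    (LinearMap.injective_iff_surjective).1 step_matrix_injective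
  obtain ⟨α, hα⟩ := hsurj (fun l => g (p l))
  let e : Fin (Fintype.card I) ≃ I := (Fintype.equivFin I).symm
  refine ⟨Fintype.card I, fun i => p (e i), fun i => α (e i), ?_, ?_⟩
  · intro i
    constructor <;> intro j
    · exact div_nonneg (Nat.cast_nonneg _) hmR.le
    · show ((e i j : ℕ) : ℝ) / m ≤ 1
      rw [div_le_one hmR]
      exact_mod_cast Nat.lt_succ_iff.1 (e i j).isLt
  · intro x hx
    have hx0 : ∀ j, 0 ≤ x j := fun j => hx.1 j
    have hx1 : ∀ j, x j ≤ 1 := fun j => hx.2 j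
    -- the floor gridpoint
    have hfl : ∀ j, ⌊x j * m⌋₊ < m + 1 := by
      intro j
      have : x j * m ≤ (m:ℝ) := by nlinarith [hx1 j]
      have := Nat.floor_le_floor this
      simpa [Nat.floor_natCast] using Nat.lt_succ_of_le this
    let F : I := fun j => ⟨⌊x j * m⌋₊, hfl j⟩
    have hxm : ∀ j, (0:ℝ) ≤ x j * m := fun j => mul_nonneg (hx0 j) hmR.le
    -- indicator evaluation
    have hind : ∀ k : I, ({y : Fin n → ℝ | ∀ j, p k j ≤ y j}.indicator
        (fun _ => (1:ℝ)) x) = if k ≤ F then 1 else 0 := by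
      intro k
      have hiff : (∀ j, p k j ≤ x j) ↔ k ≤ F := by
        constructor
        · intro h j
          have := h j
          rw [div_le_iff₀ hmR] at this
          exact (Nat.le_floor_iff (hxm j)).2 this
        · intro h j
          have : ((k j : ℕ):ℝ) ≤ x j * m := by
            calc ((k j : ℕ):ℝ) ≤ (⌊x j * m⌋₊ : ℝ) := by exact_mod_cast h j
            _ ≤ x j * m := Nat.floor_le (hxm j)
          rw [show p k j = (k j : ℕ) / m from rfl, div_le_iff₀ hmR]
          exact this
      by_cases h : k ≤ F
      · rw [if_pos h, Set.indicator_of_mem]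
        exact hiff.2 h
      · rw [if_neg h, Set.indicator_of_notMem]
        exact fun hc => h (hiff.1 hc)
    -- the sum equals g (p F)
    have hsum : (∑ i, α (e i) * ({y : Fin n → ℝ | ∀ j, p (e i) j ≤ y j}.indicator
        (fun _ => (1 : ℝ)) x)) = g (p F) := by
      rw [show (∑ i, α (e i) * ({y : Fin n → ℝ | ∀ j, p (e i) j ≤ y j}.indicator
          (fun _ => (1 : ℝ)) x)) = ∑ k : I, α k * ({y : Fin n → ℝ | ∀ j, p k j ≤ y j}.indicator
          (fun _ => (1 : ℝ)) x) from Fintype.sum_equiv e _ _ (fun i => rfl)]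
      have := congrFun hα F
      simp only [Matrix.mulVecLin_apply, Matrix.mulVec, dotProduct,
        Matrix.of_apply] at this
      rw [← this]
      exact Finset.sum_congr rfl fun k _ => by rw [hind k, mul_comm]
    rw [hsum]
    -- p F is in the box and close to x
    have hpFle : ∀ j, p F j ≤ x j := by
      intro j
      rw [show p F j = (⌊x j * m⌋₊:ℝ) / m from rfl, div_le_iff₀ hmR]
      exact Nat.floor_le (hxm j)
    have hpF : p F ∈ Set.Icc (0 : Fin n → ℝ) 1 := by
      constructor <;> intro j
      · exact div_nonneg (Nat.cast_nonneg _) hmR.le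
      · exact le_trans (hpFle j) (hx1 j)
    have hnorm : ‖p F - x‖ ≤ ε / L := by
      have hC : (0:ℝ) ≤ ε / L := le_of_lt (div_pos hε hL)
      rw [pi_norm_le_iff_of_nonneg hC]
      intro j
      rw [Pi.sub_apply, Real.norm_eq_abs, abs_sub_comm, abs_of_nonneg (by linarith [hpFle j])]
      have h1 : x j * m < ⌊x j * m⌋₊ + 1 := Nat.lt_floor_add_one _
      have h2 : x j - p F j < 1 / m := by
        rw [show p F j = (⌊x j * m⌋₊:ℝ) / m from rfl]
        rw [sub_lt_iff_lt_add, ← add_div, lt_div_iff₀ hmR] at *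
        nlinarith
      linarith
    calc |g (p F) - g x| ≤ L * ‖p F - x‖ := hLip _ hpF _ hx
    _ ≤ L * (ε / L) := by nlinarith [norm_nonneg (p F - x)]
    _ = ε := by field_simp
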